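/- arXiv:2107.06678 — 9 statements merged into one kernel-verified Lean document; each statement's English description precedes it below -/
import Mathlib

section
/- In a K-user NOMA cluster where every non-head user's rate is fixed at its minimum demand, the power of each non-head user k < K is an affine increasing function of the total cluster power q: p_k = β_k ∏_{j<k}(1-β_j) · q + c_k, where β_k = (2^(R_k^min/W)-1)/2^(R_k^min/W) ∈ (0,1) and c_k = β_k ( 1/h_k - Σ_{j<k} (β_j/h_j) ∏_{j<l<k}(1-β_l) ). -/
open Finset

/-- In a `(K+1)`-user NOMA cluster (head user = the strongest, `Fin.last K`) where every
non-head user's rate is fixed exactly at its minimum demand and the total power is `q`,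
each non-head user's power is the affine function of `q`:
`p k = β k * ∏_{j < k} (1 - β j) * q + c k`, with
`β k = (2^(Rmin k / W) - 1) / 2^(Rmin k / W)` and
`c k = β k * (1 / h k - ∑_{j < k} (β j / h j) * ∏_{j < l < k} (1 - β l))`. -/
theorem noma_nonhead_power_affine_in_cluster_power
    (K : ℕ) (W : ℝ) (hW : 0 < W)
    (h : Fin (K + 1) → ℝ) (hpos : ∀ k, 0 < h k) (hmono : StrictMono h)
    (Rmin : Fin (K + 1) → ℝ) (hR : ∀ k, 0 < Rmin k)
    (β : Fin (K + 1) → ℝ)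
    (hβ : ∀ k, β k = ((2 : ℝ) ^ (Rmin k / W) - 1) / (2 : ℝ) ^ (Rmin k / W))
    (c : Fin (K + 1) → ℝ)
    (hc : ∀ k, c k = β k * (1 / h k -
      ∑ j ∈ univ.filter (fun j => j < k),
        (β j / h j) * ∏ l ∈ univ.filter (fun l => j < l ∧ l < k), (1 - β l)))
    (q : ℝ) (p : Fin (K + 1) → ℝ)
    (hmin : ∀ k, k ≠ Fin.last K →
      p k * h k = ((2 : ℝ) ^ (Rmin k / W) - 1) *
        (1 + h k * ∑ j ∈ univ.filter (fun j => k < j), p j))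
    (hhead : p (Fin.last K) = q - ∑ k ∈ univ.filter (fun k => k < Fin.last K), p k) :
    ∀ k, k ≠ Fin.last K →
      p k = β k * (∏ j ∈ univ.filter (fun j => j < k), (1 - β j)) * q + c k := by
  -- total power is q
  have huniv : (univ : Finset (Fin (K+1))) =
      insert (Fin.last K) (univ.filter (fun k => k < Fin.last K)) := by
    ext j
    have := j.isLt
    simp [Fin.lt_def, Fin.ext_iff, Fin.last]
    omega
  have hsum : ∑ j, p j = q := by
    rw [huniv, Finset.sum_insert (by simp), hhead]
    ring
  -- tail sum
  have hsplit : ∀ k : Fin (K+1), ∑ j ∈ univ.filter (fun j => k < j), p j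
      = q - (∑ j ∈ univ.filter (fun j => j < k), p j) - p k := by
    intro k
    have h1 := Finset.sum_filter_add_sum_filter_not univ (fun j => j < k) p
    have h2 : univ.filter (fun j => ¬ j < k) = insert k (univ.filter (fun j => k < j)) := by
      ext j
      simp only [Finset.mem_filter, Finset.mem_univ, true_and, Finset.mem_insert,
        Fin.lt_def, Fin.ext_iff, not_lt]
      omega
    rw [h2, Finset.sum_insert (by simp)] at h1
    rw [hsum] at h1
    linarith
  -- per-user power equation
  have hpk : ∀ k, k ≠ Fin.last K →
      p k = β k / h k + β k * (q - ∑ j ∈ univ.filter (fun j => j < k), p j) := by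
    intro k hk
    have hx : (0:ℝ) < (2:ℝ) ^ (Rmin k / W) := Real.rpow_pos_of_pos two_pos _
    have hm := hmin k hk
    rw [hsplit k] at hm
    have hhk := hpos k
    have key : p k * ((2:ℝ) ^ (Rmin k / W) * h k)
        = ((2:ℝ) ^ (Rmin k / W) - 1) *
          (1 + h k * (q - ∑ j ∈ univ.filter (fun j => j < k), p j)) := by
      linear_combination hm
    have hne0 : (2:ℝ) ^ (Rmin k / W) * h k ≠ 0 := by positivity
    have hp : p k = ((2:ℝ) ^ (Rmin k / W) - 1) *
          (1 + h k * (q - ∑ j ∈ univ.filter (fun j => j < k), p j)) /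
          ((2:ℝ) ^ (Rmin k / W) * h k) := (eq_div_iff hne0).mpr key
    rw [hp, hβ k]
    field_simp
  -- closed form for U_k
  have hU : ∀ k : Fin (K+1),
      q - ∑ j ∈ univ.filter (fun j => j < k), p j
      = (∏ j ∈ univ.filter (fun j => j < k), (1 - β j)) * q
        - ∑ j ∈ univ.filter (fun j => j < k),
            (β j / h j) * ∏ l ∈ univ.filter (fun l => j < l ∧ l < k), (1 - β l) := by
    intro k
    induction k using Fin.induction with
    | zero =>
        have he : univ.filter (fun j : Fin (K+1) => j < 0) = ∅ := by
          apply Finset.filter_eq_empty_iff.mpr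
          intro j _
          exact Fin.not_lt_zero j
        rw [he]
        simp
    | succ i ih =>
        have hne : i.castSucc ≠ Fin.last K := Fin.ne_of_lt (Fin.castSucc_lt_last i)
        have hins : univ.filter (fun j => j < i.succ)
            = insert i.castSucc (univ.filter (fun j => j < i.castSucc)) := by
          ext j
          simp only [Finset.mem_filter, Finset.mem_univ, true_and, Finset.mem_insert,
            Fin.lt_def, Fin.ext_iff, Fin.coe_castSucc, Fin.val_succ]
          omega
        have hnm : i.castSucc ∉ univ.filter (fun j => j < i.castSucc) := by simp
        rw [hins, Finset.sum_insert hnm, Finset.prod_insert hnm, Finset.sum_insert hnm]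
        have hemp : univ.filter (fun l => i.castSucc < l ∧ l < i.succ) = ∅ := by
          apply Finset.filter_eq_empty_iff.mpr
          intro l _
          simp only [Fin.lt_def, Fin.coe_castSucc, Fin.val_succ, not_and, not_lt]
          omega
        rw [hemp]
        have hterms : ∑ j ∈ univ.filter (fun j => j < i.castSucc),
              (β j / h j) * ∏ l ∈ univ.filter (fun l => j < l ∧ l < i.succ), (1 - β l)
            = ∑ j ∈ univ.filter (fun j => j < i.castSucc),
              (1 - β i.castSucc) *
                ((β j / h j) * ∏ l ∈ univ.filter (fun l => j < l ∧ l < i.castSucc), (1 - β l)) := by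
          apply Finset.sum_congr rfl
          intro j hj
          have hjlt : j < i.castSucc := by simpa using hj
          have hins2 : univ.filter (fun l => j < l ∧ l < i.succ)
              = insert i.castSucc (univ.filter (fun l => j < l ∧ l < i.castSucc)) := by
            ext l
            have hjv : j.val < i.val := hjlt
            simp only [Finset.mem_filter, Finset.mem_univ, true_and, Finset.mem_insert,
              Fin.lt_def, Fin.ext_iff, Fin.coe_castSucc, Fin.val_succ]
            omega
          have hnm2 : i.castSucc ∉ univ.filter (fun l => j < l ∧ l < i.castSucc) := by simp
          rw [hins2, Finset.prod_insert hnm2]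
          ring
        rw [hterms, ← Finset.mul_sum, hpk i.castSucc hne]
        simp only [Finset.prod_empty, mul_one]
        linear_combination (1 - β i.castSucc) * ih
  -- conclude
  intro k hk
  rw [hpk k hk, hU k, hc k]
  ring
end

section
/- In a K-user NOMA cluster with fixed total power q, if the non-head users' powers are set by the affine rule p_k = β_k ∏_{j<k}(1-β_j)·q + c_k (meeting their minimum rates exactly) and the head user gets the remainder p_K = αq - c, then the cluster sum-rate equals Σ_{k=1}^{K-1} R_k^min + W·log2(1 + (αq - c)·h_K); i.e., the sum-rate is a strictly concave, strictly increasing function of q on the feasible region where αq - c ≥ 0. -/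
open Finset

/-- Achievable rate of user `k` in a NOMA cluster. -/
noncomputable def nomaRate {K : ℕ} (W : ℝ) (h p : Fin K → ℝ) (k : Fin K) : ℝ :=
  W * Real.logb 2
    (1 + p k * h k / (1 + h k * ∑ j ∈ univ.filter (fun j => k < j), p j))

/-- If every non-head user's rate equals its minimum demand and the head user's power is
`α q - c`, the cluster sum-rate equals `∑_{k ≠ head} Rmin k + W log₂(1 + (αq - c) h_K)`;
moreover `q ↦ W log₂(1 + (αq - c) h_K)` is strictly increasing and strictly concave on
`{q : αq - c > -1 / h_K}`. -/
theorem noma_cluster_sum_rate_closed_form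
    (K : ℕ) (W : ℝ) (hW : 0 < W)
    (h : Fin (K + 1) → ℝ) (hpos : ∀ k, 0 < h k) (hmono : StrictMono h)
    (Rmin : Fin (K + 1) → ℝ) (α c q : ℝ) (hα : 0 < α)
    (p : Fin (K + 1) → ℝ)
    (hrate : ∀ k, k ≠ Fin.last K → nomaRate W h p k = Rmin k)
    (hhead : p (Fin.last K) = α * q - c) :
    (∑ k, nomaRate W h p k =
        (∑ k ∈ univ.filter (fun k => k ≠ Fin.last K), Rmin k) +
          W * Real.logb 2 (1 + (α * q - c) * h (Fin.last K))) ∧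
    StrictMonoOn (fun q' : ℝ => W * Real.logb 2 (1 + (α * q' - c) * h (Fin.last K)))
      {q' : ℝ | -1 / h (Fin.last K) < α * q' - c} ∧
    StrictConcaveOn ℝ {q' : ℝ | -1 / h (Fin.last K) < α * q' - c}
      (fun q' : ℝ => W * Real.logb 2 (1 + (α * q' - c) * h (Fin.last K))) := by
  set hK := h (Fin.last K) with hKdef
  have hKpos : 0 < hK := hpos _
  -- set facts
  have hset : {q' : ℝ | -1 / hK < α * q' - c} = Set.Ioi ((c + -1 / hK) / α) := by
    ext x
    simp only [Set.mem_setOf_eq, Set.mem_Ioi]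
    rw [div_lt_iff₀ hα, lt_sub_iff_add_lt, add_comm c, mul_comm]
  have hgpos : ∀ x : ℝ, -1 / hK < α * x - c → 0 < 1 + (α * x - c) * hK := by
    intro x hx
    have : -1 < (α * x - c) * hK := by
      have := (div_lt_iff₀ hKpos).mp hx
      linarith
    linarith
  refine ⟨?_, ?_, ?_⟩
  · -- sum formula
    have hsplit := Finset.sum_filter_add_sum_filter_not univ
      (fun k => k ≠ Fin.last K) (fun k => nomaRate W h p k)
    have hcompl : univ.filter (fun k : Fin (K + 1) => ¬ k ≠ Fin.last K) = {Fin.last K} := by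
      ext k; simp
    have hlast : nomaRate W h p (Fin.last K) =
        W * Real.logb 2 (1 + (α * q - c) * hK) := by
      have hempty : univ.filter (fun j : Fin (K + 1) => Fin.last K < j) = ∅ := by
        ext j
        simp only [mem_filter, mem_univ, true_and, notMem_empty, iff_false]
        exact not_lt.mpr (Fin.le_last j)
      rw [nomaRate, hempty]
      simp [hhead, mul_comm, hKdef]
    rw [← hsplit, hcompl, Finset.sum_singleton, hlast]
    congr 1
    exact Finset.sum_congr rfl fun k hk => hrate k (Finset.mem_filter.mp hk).2
  · -- strict mono
    intro x hx y hy hxy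
    simp only [Set.mem_setOf_eq] at hx hy
    have h1 : 0 < 1 + (α * x - c) * hK := hgpos x hx
    have h2 : 1 + (α * x - c) * hK < 1 + (α * y - c) * hK := by
      have : α * x < α * y := by exact mul_lt_mul_of_pos_left hxy hα
      nlinarith
    exact mul_lt_mul_of_pos_left (Real.logb_lt_logb one_lt_two h1 h2) hW
  · -- strict concave
    constructor
    · rw [hset]; exact convex_Ioi _
    · intro x hx y hy hxy a b ha hb hab
      simp only [Set.mem_setOf_eq] at hx hy
      simp only [smul_eq_mul]
      have gx : 0 < 1 + (α * x - c) * hK := hgpos x hx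
      have gy : 0 < 1 + (α * y - c) * hK := hgpos y hy
      have haff : 1 + (α * (a * x + b * y) - c) * hK =
          a * (1 + (α * x - c) * hK) + b * (1 + (α * y - c) * hK) := by
        rw [show b = 1 - a from by linarith]; ring
      have hne : 1 + (α * x - c) * hK ≠ 1 + (α * y - c) * hK := by
        intro hEq
        apply hxy
        have : α * x = α * y := by nlinarith [hKpos.ne']
        exact mul_left_cancel₀ hα.ne' this
      have hlog := strictConcaveOn_log_Ioi.2 (Set.mem_Ioi.mpr gx) (Set.mem_Ioi.mpr gy)
        hne ha hb hab
      simp only [smul_eq_mul] at hlog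
      have hlog2 : a * Real.logb 2 (1 + (α * x - c) * hK) +
          b * Real.logb 2 (1 + (α * y - c) * hK) <
          Real.logb 2 (1 + (α * (a * x + b * y) - c) * hK) := by
        rw [haff]
        unfold Real.logb
        have hlt : 0 < Real.log 2 := Real.log_pos one_lt_two
        have hinv : 0 < (Real.log 2)⁻¹ := inv_pos.mpr hlt
        rw [div_eq_mul_inv, div_eq_mul_inv, div_eq_mul_inv]
        nlinarith [hlog, hinv]
      calc a * (W * Real.logb 2 (1 + (α * x - c) * hK)) +
            b * (W * Real.logb 2 (1 + (α * y - c) * hK))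
          = W * (a * Real.logb 2 (1 + (α * x - c) * hK) +
            b * Real.logb 2 (1 + (α * y - c) * hK)) := by ring
        _ < W * Real.logb 2 (1 + (α * (a * x + b * y) - c) * hK) :=
            mul_lt_mul_of_pos_left hlog2 hW
end

section
/- The sum-rate function of a K-user Gaussian NOMA cluster, F(p) = Σ_{k=1}^{K} log(1 + p_k h_k / (1 + h_k Σ_{j>k} p_j)) with 0 < h_1 < ... < h_K, simplifies via telescoping to F(p) = Σ_{k=1}^{K} [ log(1 + h_k Σ_{j≥k} p_j) - log(1 + h_k Σ_{j>k} p_j) ], and F is concave in p on the nonnegative orthant. -/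
open Finset

section NomaAux

private lemma noma_scalar_concave {a b : ℝ} (ha : 0 < a) (hb : 0 ≤ b) (hba : b ≤ a) :
    ConcaveOn ℝ (Set.Ici (0:ℝ))
      (fun x => Real.log (1 + a * x) - Real.log (1 + b * x)) := by
  have hIoi : interior (Set.Ici (0:ℝ)) = Set.Ioi 0 := interior_Ici
  have hposa : ∀ x : ℝ, 0 ≤ x → (0:ℝ) < 1 + a * x := fun x hx => by nlinarith
  have hposb : ∀ x : ℝ, 0 ≤ x → (0:ℝ) < 1 + b * x := fun x hx => by nlinarith
  have hder : ∀ x : ℝ, 0 ≤ x → HasDerivAt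
      (fun x => Real.log (1 + a * x) - Real.log (1 + b * x))
      (a / (1 + a * x) - b / (1 + b * x)) x := by
    intro x hx
    have d1 : HasDerivAt (fun x : ℝ => 1 + a * x) a x := by
      simpa using ((hasDerivAt_id x).const_mul a).const_add 1
    have d2 : HasDerivAt (fun x : ℝ => 1 + b * x) b x := by
      simpa using ((hasDerivAt_id x).const_mul b).const_add 1
    have l1 := (Real.hasDerivAt_log (hposa x hx).ne').comp x d1
    have l2 := (Real.hasDerivAt_log (hposb x hx).ne').comp x d2
    have := l1.sub l2
    simpa [Pi.sub_def, Function.comp_apply, Function.comp, div_eq_inv_mul] using this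
  apply AntitoneOn.concaveOn_of_deriv (convex_Ici 0)
  · apply ContinuousOn.sub
    · exact (ContinuousOn.log (by fun_prop) (fun x hx => (hposa x hx).ne'))
    · exact (ContinuousOn.log (by fun_prop) (fun x hx => (hposb x hx).ne'))
  · rw [hIoi]
    intro x hx
    exact ((hder x (le_of_lt hx)).differentiableAt).differentiableWithinAt
  · rw [hIoi]
    intro x hx y hy hxy
    have hx0 : (0:ℝ) ≤ x := le_of_lt hx
    have hy0 : (0:ℝ) ≤ y := le_of_lt hy
    rw [(hder x hx0).deriv, (hder y hy0).deriv]
    have pax := hposa x hx0; have pay := hposa y hy0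
    have pbx := hposb x hx0; have pby := hposb y hy0
    rw [div_sub_div _ _ pay.ne' pby.ne', div_sub_div _ _ pax.ne' pbx.ne',
      div_le_div_iff₀ (by positivity) (by positivity)]
    have hD : (1 + a * x) * (1 + b * x) ≤ (1 + a * y) * (1 + b * y) := by
      nlinarith [mul_nonneg (mul_nonneg ha.le hb)
        (mul_nonneg (sub_nonneg.2 hxy) (add_nonneg hy0 hx0)),
        mul_nonneg (add_nonneg ha.le hb) (sub_nonneg.2 hxy)]
    nlinarith [mul_le_mul_of_nonneg_left hD (sub_nonneg.2 hba)]

private lemma noma_comp_concave {n : ℕ} {s : Set (Fin n → ℝ)} (hs : Convex ℝ s) {φ : ℝ → ℝ}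
    (hφ : ConcaveOn ℝ (Set.Ici 0) φ) (L : (Fin n → ℝ) → ℝ)
    (hL : ∀ (a b : ℝ) (x y : Fin n → ℝ), L (a • x + b • y) = a * L x + b * L y)
    (hLs : ∀ x ∈ s, 0 ≤ L x) :
    ConcaveOn ℝ s (fun p => φ (L p)) := by
  refine ⟨hs, fun x hx y hy a b ha hb hab => ?_⟩
  show a • φ (L x) + b • φ (L y) ≤ φ (L (a • x + b • y))
  rw [hL]
  exact hφ.2 (Set.mem_Ici.2 (hLs x hx)) (Set.mem_Ici.2 (hLs y hy)) ha hb hab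

private lemma noma_sum_concave {ι : Type*} {n : ℕ} {s : Set (Fin n → ℝ)} (hs : Convex ℝ s)
    (t : Finset ι) (f : ι → (Fin n → ℝ) → ℝ) (hf : ∀ i ∈ t, ConcaveOn ℝ s (f i)) :
    ConcaveOn ℝ s (fun p => ∑ i ∈ t, f i p) := by
  classical
  induction t using Finset.induction with
  | empty => simpa using concaveOn_const (0:ℝ) hs
  | insert a t' hnot ih =>
    simp only [Finset.sum_insert hnot]
    exact (hf a (Finset.mem_insert_self a t')).add
      (ih (fun i hi => hf i (Finset.mem_insert_of_mem hi)))

private lemma noma_concave_congr {n : ℕ} {s : Set (Fin n → ℝ)} {f g : (Fin n → ℝ) → ℝ}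
    (hg : ConcaveOn ℝ s g) (hfg : ∀ x ∈ s, f x = g x) : ConcaveOn ℝ s f := by
  refine ⟨hg.1, fun x hx y hy a b ha hb hab => ?_⟩
  show a • f x + b • f y ≤ f (a • x + b • y)
  rw [hfg _ hx, hfg _ hy, hfg _ (hg.1 hx hy ha hb hab)]
  exact hg.2 hx hy ha hb hab

private lemma noma_logterm {c q t' : ℝ} (hc : 0 < c) (hq : 0 ≤ q) (ht' : 0 ≤ t') :
    Real.log (1 + q * c / (1 + c * t'))
      = Real.log (1 + c * (q + t')) - Real.log (1 + c * t') := by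
  have h1 : (0:ℝ) < 1 + c * t' := by nlinarith
  have h2 : (0:ℝ) < 1 + c * (q + t') := by nlinarith
  rw [← Real.log_div h2.ne' h1.ne']
  congr 1
  field_simp
  ring

/-- `nomaT K m p = ∑_{j ≥ m} p j`. -/
private def nomaT (K m : ℕ) (p : Fin K → ℝ) : ℝ :=
  ∑ j ∈ univ.filter (fun j : Fin K => m ≤ (j:ℕ)), p j

private lemma nomaT_nonneg {K m : ℕ} {p : Fin K → ℝ} (hp : ∀ k, 0 ≤ p k) :
    0 ≤ nomaT K m p :=
  Finset.sum_nonneg (fun j _ => hp j)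

private lemma nomaT_top {K : ℕ} (p : Fin K → ℝ) : nomaT K K p = 0 := by
  unfold nomaT
  rw [Finset.filter_false_of_mem (fun j _ => Nat.not_le.mpr j.isLt), Finset.sum_empty]

private lemma nomaT_succ {K : ℕ} (p : Fin K → ℝ) (k : Fin K) :
    nomaT K (k:ℕ) p = p k + nomaT K ((k:ℕ)+1) p := by
  unfold nomaT
  have hins : (univ.filter (fun j : Fin K => (k:ℕ) ≤ (j:ℕ)))
      = insert k (univ.filter (fun j : Fin K => (k:ℕ)+1 ≤ (j:ℕ))) := by
    ext j
    simp only [Finset.mem_filter, Finset.mem_univ, true_and, Finset.mem_insert]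
    constructor
    · intro hj
      rcases Nat.eq_or_lt_of_le hj with heq | hlt
      · left; exact (Fin.ext heq.symm)
      · right; omega
    · rintro (rfl | hj) <;> omega
  rw [hins, Finset.sum_insert (by simp)]

private lemma nomaT_lin {K : ℕ} (m : ℕ) (a b : ℝ) (x y : Fin K → ℝ) :
    nomaT K m (a • x + b • y) = a * nomaT K m x + b * nomaT K m y := by
  unfold nomaT
  simp [Finset.sum_add_distrib, Finset.mul_sum]

/-- CNR of the previous user (`0` for the first). -/
private noncomputable def nomaPrev (K : ℕ) (h : Fin K → ℝ) (m : ℕ) : ℝ :=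
  if hm : 0 < m ∧ m ≤ K then h ⟨m-1, by omega⟩ else 0

private lemma nomaPrev_nonneg {K : ℕ} {h : Fin K → ℝ} (hpos : ∀ k, 0 < h k) (m : ℕ) :
    0 ≤ nomaPrev K h m := by
  unfold nomaPrev
  split
  · exact (hpos _).le
  · exact le_rfl

private lemma nomaPrev_le {K : ℕ} {h : Fin K → ℝ} (hpos : ∀ k, 0 < h k)
    (hmono : StrictMono h) (k : Fin K) : nomaPrev K h (k:ℕ) ≤ h k := by
  unfold nomaPrev
  split
  · rename_i hm
    refine (hmono ?_).le
    simp only [Fin.lt_def]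
    omega
  · exact (hpos k).le

private lemma nomaPrev_succ {K : ℕ} (h : Fin K → ℝ) (k : Fin K) :
    nomaPrev K h ((k:ℕ)+1) = h k := by
  unfold nomaPrev
  rw [dif_pos ⟨Nat.succ_pos _, k.isLt⟩]
  congr 1

end NomaAux

/-- Telescoped form and concavity of the NOMA cluster sum-rate: with `0 < h 1 < ... < h K`,
`∑ k log(1 + p k h k / (1 + h k ∑_{j>k} p j))
  = ∑ k [log(1 + h k ∑_{j≥k} p j) - log(1 + h k ∑_{j>k} p j)]`
for nonnegative `p`, and the sum-rate is concave on the nonnegative orthant. -/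
theorem noma_sum_rate_telescoped_and_concave
    (K : ℕ) (h : Fin K → ℝ) (hpos : ∀ k, 0 < h k) (hmono : StrictMono h) :
    (∀ p : Fin K → ℝ, (∀ k, 0 ≤ p k) →
      ∑ k, Real.log (1 + p k * h k /
          (1 + h k * ∑ j ∈ univ.filter (fun j => k < j), p j))
        = ∑ k, (Real.log (1 + h k * ∑ j ∈ univ.filter (fun j => k ≤ j), p j)
              - Real.log (1 + h k * ∑ j ∈ univ.filter (fun j => k < j), p j))) ∧
    ConcaveOn ℝ {p : Fin K → ℝ | ∀ k, 0 ≤ p k}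
      (fun p => ∑ k, Real.log (1 + p k * h k /
        (1 + h k * ∑ j ∈ univ.filter (fun j => k < j), p j))) := by
  classical
  set s : Set (Fin K → ℝ) := {p | ∀ k, 0 ≤ p k} with hs_def
  have hsconv : Convex ℝ s := by
    have hseq : s = Set.pi Set.univ (fun _ : Fin K => Set.Ici (0:ℝ)) := by
      ext p; simp [hs_def, Set.mem_pi, Pi.le_def]
    rw [hseq]; exact convex_pi (fun i _ => convex_Ici 0)
  have hfle : ∀ (k : Fin K) (p : Fin K → ℝ),
      (∑ j ∈ univ.filter (fun j => k ≤ j), p j) = nomaT K (k:ℕ) p := by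
    intro k p
    unfold nomaT
    apply Finset.sum_congr _ (fun _ _ => rfl)
    ext j
    simp only [Finset.mem_filter, Finset.mem_univ, true_and, Fin.le_def]
  have hflt : ∀ (k : Fin K) (p : Fin K → ℝ),
      (∑ j ∈ univ.filter (fun j => k < j), p j) = nomaT K ((k:ℕ)+1) p := by
    intro k p
    unfold nomaT
    apply Finset.sum_congr _ (fun _ _ => rfl)
    ext j
    simp only [Finset.mem_filter, Finset.mem_univ, true_and, Fin.lt_def]
    omega
  -- per-term identity
  have hterm : ∀ (p : Fin K → ℝ), (∀ k, 0 ≤ p k) → ∀ k : Fin K,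
      Real.log (1 + p k * h k / (1 + h k * ∑ j ∈ univ.filter (fun j => k < j), p j))
        = Real.log (1 + h k * nomaT K (k:ℕ) p)
          - Real.log (1 + h k * nomaT K ((k:ℕ)+1) p) := by
    intro p hp k
    rw [hflt k p, nomaT_succ p k]
    exact noma_logterm (hpos k) (hp k) (nomaT_nonneg hp)
  have part1 : ∀ p : Fin K → ℝ, (∀ k, 0 ≤ p k) →
      ∑ k, Real.log (1 + p k * h k /
          (1 + h k * ∑ j ∈ univ.filter (fun j => k < j), p j))
        = ∑ k, (Real.log (1 + h k * ∑ j ∈ univ.filter (fun j => k ≤ j), p j)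
              - Real.log (1 + h k * ∑ j ∈ univ.filter (fun j => k < j), p j)) := by
    intro p hp
    apply Finset.sum_congr rfl
    intro k _
    rw [hterm p hp k, hfle k p, hflt k p]
  -- the regrouped concave form
  have hFG : ∀ p ∈ s, (∑ k, Real.log (1 + p k * h k /
        (1 + h k * ∑ j ∈ univ.filter (fun j => k < j), p j)))
      = ∑ k : Fin K, (Real.log (1 + h k * nomaT K (k:ℕ) p)
          - Real.log (1 + nomaPrev K h (k:ℕ) * nomaT K (k:ℕ) p)) := by
    intro p hp
    have hp' : ∀ k, 0 ≤ p k := hp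
    rw [Finset.sum_congr rfl (fun k _ => hterm p hp' k)]
    rw [Finset.sum_sub_distrib, Finset.sum_sub_distrib]
    congr 1
    -- shift:  ∑ k, log(1 + h k * T (k+1) p) = ∑ k, log(1 + prev k * T k p)
    have hu : ∀ k : Fin K, Real.log (1 + h k * nomaT K ((k:ℕ)+1) p)
        = Real.log (1 + nomaPrev K h ((k:ℕ)+1) * nomaT K ((k:ℕ)+1) p) := by
      intro k; rw [nomaPrev_succ h k]
    rw [Finset.sum_congr rfl (fun k _ => hu k)]
    have e1 : ∑ k : Fin K, Real.log (1 + nomaPrev K h ((k:ℕ)+1) * nomaT K ((k:ℕ)+1) p)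
        = ∑ m ∈ Finset.range K, Real.log (1 + nomaPrev K h (m+1) * nomaT K (m+1) p) :=
      Fin.sum_univ_eq_sum_range (fun m => Real.log (1 + nomaPrev K h (m+1) * nomaT K (m+1) p)) K
    have e2 : ∑ k : Fin K, Real.log (1 + nomaPrev K h (k:ℕ) * nomaT K (k:ℕ) p)
        = ∑ m ∈ Finset.range K, Real.log (1 + nomaPrev K h m * nomaT K m p) :=
      Fin.sum_univ_eq_sum_range (fun m => Real.log (1 + nomaPrev K h m * nomaT K m p)) K
    rw [e1, e2]
    have h0 : Real.log (1 + nomaPrev K h 0 * nomaT K 0 p) = 0 := by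
      unfold nomaPrev; simp
    have hK : Real.log (1 + nomaPrev K h K * nomaT K K p) = 0 := by
      rw [nomaT_top p]; simp
    have hshift := Finset.sum_range_succ' (fun m => Real.log (1 + nomaPrev K h m * nomaT K m p)) K
    rw [Finset.sum_range_succ (fun m => Real.log (1 + nomaPrev K h m * nomaT K m p)) K] at hshift
    linarith [hshift]
  have hGconc : ConcaveOn ℝ s (fun p => ∑ k : Fin K,
      (Real.log (1 + h k * nomaT K (k:ℕ) p)
        - Real.log (1 + nomaPrev K h (k:ℕ) * nomaT K (k:ℕ) p))) := by
    apply noma_sum_concave hsconv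
    intro k _
    have hφ := noma_scalar_concave (hpos k) (nomaPrev_nonneg hpos (k:ℕ))
      (nomaPrev_le hpos hmono k)
    exact noma_comp_concave hsconv hφ (nomaT K (k:ℕ)) (nomaT_lin (k:ℕ))
      (fun x hx => nomaT_nonneg hx)
  exact ⟨part1, noma_concave_congr hGconc hFG⟩
end

section
/- The sum-rate of a K-user NOMA cluster is strictly increasing in the power of the cluster-head user: if p and p' agree in all coordinates except p'_K > p_K, then Σ_k R_k(p') > Σ_k R_k(p). -/
open Finset

/-- Interference seen by user `k`. -/
noncomputable def interf {K : ℕ} (p : Fin K → ℝ) (k : Fin K) : ℝ :=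
  ∑ j ∈ univ.filter (fun j => k < j), p j

lemma interf_nonneg {K : ℕ} {p : Fin K → ℝ} (hp : ∀ k, 0 ≤ p k) (k : Fin K) :
    0 ≤ interf p k := Finset.sum_nonneg fun j _ => hp j

lemma interf_last {K : ℕ} (p : Fin (K+1) → ℝ) : interf p (Fin.last K) = 0 := by
  unfold interf
  have : univ.filter (fun j => Fin.last K < j) = (∅ : Finset (Fin (K+1))) := by
    ext j; simp [not_lt.mpr (Fin.le_last j)]
  rw [this, Finset.sum_empty]

lemma interf_castSucc {K : ℕ} (p : Fin (K+1) → ℝ) (i : Fin K) :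
    interf p i.castSucc = p i.succ + interf p i.succ := by
  unfold interf
  have hset : univ.filter (fun j => i.castSucc < j)
      = insert i.succ (univ.filter (fun j => i.succ < j)) := by
    ext j
    simp only [mem_filter, mem_univ, true_and, mem_insert]
    rw [Fin.castSucc_lt_iff_succ_le, le_iff_eq_or_lt]
    constructor
    · rintro (h | h)
      · exact Or.inl h.symm
      · exact Or.inr h
    · rintro (h | h)
      · exact Or.inl h.symm
      · exact Or.inr h
  rw [hset, Finset.sum_insert (by simp)]

lemma interf_update {K : ℕ} (p : Fin (K+1) → ℝ) (v : ℝ) (k : Fin (K+1)) :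
    interf (Function.update p (Fin.last K) v) k
      = interf p k + (if k = Fin.last K then 0 else (v - p (Fin.last K))) := by
  by_cases hk : k = Fin.last K
  · subst hk
    simp [interf_last]
  · have hlt : k < Fin.last K := lt_of_le_of_ne (Fin.le_last k) hk
    have hlast : Fin.last K ∈ univ.filter (fun j => k < j) := by simp [hlt]
    unfold interf
    rw [← Finset.sum_erase_add _ _ hlast, ← Finset.sum_erase_add _ _ hlast]
    have heq : ∑ j ∈ (univ.filter (fun j => k < j)).erase (Fin.last K),
        Function.update p (Fin.last K) v j
        = ∑ j ∈ (univ.filter (fun j => k < j)).erase (Fin.last K), p j :=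
      Finset.sum_congr rfl fun j hj =>
        Function.update_of_ne (Finset.ne_of_mem_erase hj) _ _
    rw [heq, Function.update_self, if_neg hk]
    ring

lemma rate_eq {K : ℕ} (W : ℝ) (h p : Fin K → ℝ) (hh : ∀ k, 0 < h k)
    (hp : ∀ k, 0 ≤ p k) (k : Fin K) :
    nomaRate W h p k
      = W * (Real.logb 2 (1 + h k * (p k + interf p k))
          - Real.logb 2 (1 + h k * interf p k)) := by
  have hT := interf_nonneg hp k
  have hD : 0 < 1 + h k * interf p k := by
    have : 0 ≤ h k * interf p k := mul_nonneg (hh k).le hT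
    linarith
  have hN : 0 < 1 + h k * (p k + interf p k) := by
    have : 0 ≤ h k * (p k + interf p k) := mul_nonneg (hh k).le (add_nonneg (hp k) hT)
    linarith
  unfold nomaRate
  have harg : (1 : ℝ) + p k * h k / (1 + h k * ∑ j ∈ univ.filter (fun j => k < j), p j)
      = (1 + h k * (p k + interf p k)) / (1 + h k * interf p k) := by
    unfold interf at *
    field_simp
    ring
  rw [harg, Real.logb_div hN.ne' hD.ne']

lemma logb_ratio_mono {Δ x a b : ℝ} (hΔ : 0 < Δ) (hx : 0 ≤ x)
    (ha : 0 < a) (hab : a ≤ b) :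
    Real.logb 2 (1 + a * (x + Δ)) - Real.logb 2 (1 + a * x)
      ≤ Real.logb 2 (1 + b * (x + Δ)) - Real.logb 2 (1 + b * x) := by
  have hb : 0 < b := lt_of_lt_of_le ha hab
  have h1 : 0 < 1 + a * x := by nlinarith
  have h2 : 0 < 1 + a * (x + Δ) := by nlinarith
  have h3 : 0 < 1 + b * x := by nlinarith
  have h4 : 0 < 1 + b * (x + Δ) := by nlinarith
  rw [← Real.logb_div h2.ne' h1.ne', ← Real.logb_div h4.ne' h3.ne']
  apply Real.logb_le_logb_of_le one_lt_two (by positivity)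
  rw [div_le_div_iff₀ h1 h3]
  nlinarith

/-- The NOMA cluster sum-rate is strictly increasing in the cluster-head user's power:
increasing only the head user's power strictly increases the sum-rate. -/
theorem noma_sum_rate_strictly_increasing_in_head_power
    (K : ℕ) (W : ℝ) (hW : 0 < W)
    (h : Fin (K + 1) → ℝ) (hpos : ∀ k, 0 < h k) (hmono : StrictMono h)
    (p : Fin (K + 1) → ℝ) (hp : ∀ k, 0 ≤ p k)
    (v : ℝ) (hv : p (Fin.last K) < v) :
    ∑ k, nomaRate W h p k < ∑ k, nomaRate W h (Function.update p (Fin.last K) v) k := by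
  set q := Function.update p (Fin.last K) v with hqdef
  have hΔ : 0 < v - p (Fin.last K) := sub_pos.mpr hv
  set Δ := v - p (Fin.last K) with hΔdef
  have hq_nonneg : ∀ k, 0 ≤ q k := by
    intro k
    rw [hqdef, Function.update_apply]
    split
    · linarith [hp (Fin.last K)]
    · exact hp k
  have hqS : ∀ k, q k + interf q k = p k + interf p k + Δ := by
    intro k
    by_cases hk : k = Fin.last K
    · subst hk
      rw [hqdef, interf_update, if_pos rfl, Function.update_self]
      ring
    · rw [hqdef, interf_update, if_neg hk, Function.update_of_ne hk]
      ring
  have hqT : ∀ k, interf q k = interf p k + (if k = Fin.last K then 0 else Δ) := by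
    intro k; rw [hqdef, interf_update]
  -- rewrite both sums
  have hrp : ∑ k, nomaRate W h p k
      = W * ∑ k, (Real.logb 2 (1 + h k * (p k + interf p k))
          - Real.logb 2 (1 + h k * interf p k)) := by
    rw [Finset.mul_sum]
    exact Finset.sum_congr rfl fun k _ => rate_eq W h p hpos hp k
  have hrq : ∑ k, nomaRate W h q k
      = W * ∑ k, (Real.logb 2 (1 + h k * (p k + interf p k + Δ))
          - Real.logb 2 (1 + h k * (interf p k + (if k = Fin.last K then 0 else Δ)))) := by
    rw [Finset.mul_sum]
    refine Finset.sum_congr rfl fun k _ => ?_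
    rw [rate_eq W h q hpos hq_nonneg k, hqS k, hqT k]
  rw [hrp, hrq]
  apply mul_lt_mul_of_pos_left _ hW
  rw [← sub_pos, ← Finset.sum_sub_distrib]
  set F : Fin (K+1) → ℝ := fun k =>
    Real.logb 2 (1 + h k * (p k + interf p k + Δ))
      - Real.logb 2 (1 + h k * (p k + interf p k)) with hF
  set G : Fin (K+1) → ℝ := fun k =>
    Real.logb 2 (1 + h k * (interf p k + (if k = Fin.last K then 0 else Δ)))
      - Real.logb 2 (1 + h k * interf p k) with hG
  have hsum : ∑ k, ((Real.logb 2 (1 + h k * (p k + interf p k + Δ))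
          - Real.logb 2 (1 + h k * (interf p k + (if k = Fin.last K then 0 else Δ))))
        - (Real.logb 2 (1 + h k * (p k + interf p k))
          - Real.logb 2 (1 + h k * interf p k)))
      = ∑ k, (F k - G k) := by
    refine Finset.sum_congr rfl fun k _ => ?_
    rw [hF, hG]; ring
  rw [hsum, Finset.sum_sub_distrib]
  have hSumF : ∑ k, F k = F 0 + ∑ i : Fin K, F i.succ := Fin.sum_univ_succ F
  have hSumG : ∑ k, G k = (∑ i : Fin K, G i.castSucc) + G (Fin.last K) :=
    Fin.sum_univ_castSucc G
  have hGlast : G (Fin.last K) = 0 := by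
    rw [hG]; simp
  have hF0 : 0 < F 0 := by
    simp only [hF]
    have hS0 : 0 ≤ p 0 + interf p 0 := add_nonneg (hp 0) (interf_nonneg hp 0)
    have h1 : 0 < 1 + h 0 * (p 0 + interf p 0) := by
      have := mul_nonneg (hpos 0).le hS0; linarith
    have h2 : 1 + h 0 * (p 0 + interf p 0) < 1 + h 0 * (p 0 + interf p 0 + Δ) := by
      nlinarith [hpos (0 : Fin (K+1))]
    have := Real.logb_lt_logb one_lt_two h1 h2
    linarith
  have hle : ∀ i : Fin K, G i.castSucc ≤ F i.succ := by
    intro i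
    simp only [hF, hG]
    simp only [if_neg (Fin.castSucc_lt_last i).ne]
    rw [interf_castSucc p i]
    exact logb_ratio_mono hΔ
      (add_nonneg (hp i.succ) (interf_nonneg hp i.succ))
      (hpos i.castSucc) (hmono (Fin.castSucc_lt_succ : i.castSucc < i.succ)).le
  have hsumle : ∑ i : Fin K, G i.castSucc ≤ ∑ i : Fin K, F i.succ :=
    Finset.sum_le_sum fun i _ => hle i
  rw [hSumF, hSumG, hGlast]
  linarith
end

section
/- Transferring power from any non-head user to the cluster-head user strictly increases the NOMA cluster sum-rate: for ε > 0 small, replacing (p_i, p_K) by (p_i - ε, p_K + ε) for i < K strictly increases Σ_k log(1 + p_k h_k/(1 + h_k Σ_{j>k} p_j)), provided p_i ≥ ε. -/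
open Finset

private lemma log_ratio_lt {a b s ε : ℝ} (ha : 0 < a) (hab : a < b) (hs : 0 ≤ s)
    (hε : 0 < ε) :
    Real.log (1 + a * (s + ε)) - Real.log (1 + a * s)
      < Real.log (1 + b * (s + ε)) - Real.log (1 + b * s) := by
  have hb : 0 < b := ha.trans hab
  have h1 : (0:ℝ) < 1 + a * s := by positivity
  have h2 : (0:ℝ) < 1 + b * s := by positivity
  have h3 : (0:ℝ) < 1 + a * (s + ε) := by positivity
  have h4 : (0:ℝ) < 1 + b * (s + ε) := by positivity
  rw [← Real.log_div h3.ne' h1.ne', ← Real.log_div h4.ne' h2.ne']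
  apply Real.log_lt_log (by positivity)
  rw [div_lt_div_iff₀ h1 h2]
  nlinarith

private lemma term_eq {hk q t : ℝ} (hhk : 0 < hk) (hq : 0 ≤ q) (ht : 0 ≤ t) :
    Real.log (1 + q * hk / (1 + hk * t))
      = Real.log (1 + hk * (q + t)) - Real.log (1 + hk * t) := by
  have h1 : (0:ℝ) < 1 + hk * t := by positivity
  have h2 : (0:ℝ) < 1 + hk * (q + t) := by positivity
  rw [← Real.log_div h2.ne' h1.ne']
  congr 1
  field_simp
  ring

/-- Transferring power `ε > 0` from any non-head user `i` to the cluster-head user strictly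
increases the NOMA cluster sum-rate, provided `ε ≤ p i`. -/
theorem noma_power_transfer_to_head_increases_sum_rate
    (K : ℕ) (h : Fin (K + 1) → ℝ) (hpos : ∀ k, 0 < h k) (hmono : StrictMono h)
    (p : Fin (K + 1) → ℝ) (hp : ∀ k, 0 ≤ p k)
    (i : Fin (K + 1)) (hi : i ≠ Fin.last K)
    (ε : ℝ) (hε : 0 < ε) (hεp : ε ≤ p i)
    (p' : Fin (K + 1) → ℝ)
    (hp' : ∀ k, p' k = if k = i then p k - ε
      else if k = Fin.last K then p k + ε else p k) :
    ∑ k, Real.log (1 + p k * h k /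
        (1 + h k * ∑ j ∈ univ.filter (fun j => k < j), p j))
      < ∑ k, Real.log (1 + p' k * h k /
        (1 + h k * ∑ j ∈ univ.filter (fun j => k < j), p' j)) := by
  classical
  have hil : i < Fin.last K := (Fin.le_last i).lt_of_ne hi
  have hiK : (i : ℕ) < K := by simpa [Fin.lt_def] using hil
  -- nonnegativity of p'
  have hp'nn : ∀ k, 0 ≤ p' k := by
    intro k
    rw [hp' k]
    split_ifs with h1 h2
    · rw [h1]; linarith [hεp]
    · linarith [hp k]
    · exact hp k
  -- the interference terms
  set T : Fin (K+1) → ℝ := fun k => ∑ j ∈ univ.filter (fun j => k < j), p j with hTdef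
  set T' : Fin (K+1) → ℝ := fun k => ∑ j ∈ univ.filter (fun j => k < j), p' j with hT'def
  have hTnn : ∀ k, 0 ≤ T k := fun k => Finset.sum_nonneg fun j _ => hp j
  have hT'nn : ∀ k, 0 ≤ T' k := fun k => Finset.sum_nonneg fun j _ => hp'nn j
  -- pointwise description of p'
  have hp'' : ∀ j, p' j = p j + ((if j = Fin.last K then ε else 0) - (if j = i then ε else 0)) := by
    intro j
    rcases eq_or_ne j i with h1 | h1
    · have h2 : j ≠ Fin.last K := by rw [h1]; exact hi
      rw [hp' j, if_pos h1, if_neg h2, if_pos h1]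
      ring
    · rcases eq_or_ne j (Fin.last K) with h2 | h2
      · rw [hp' j, if_neg h1, if_pos h2, if_pos h2, if_neg h1]
        ring
      · rw [hp' j, if_neg h1, if_neg h2, if_neg h2, if_neg h1]
        ring
  -- T' in terms of T
  have hT'T : ∀ k, T' k = T k + ((if k < Fin.last K then ε else 0) - (if k < i then ε else 0)) := by
    intro k
    simp only [hT'def, hTdef]
    rw [Finset.sum_congr rfl (fun j _ => hp'' j)]
    rw [Finset.sum_add_distrib, Finset.sum_sub_distrib, Finset.sum_ite_eq',
      Finset.sum_ite_eq']
    simp [Finset.mem_filter]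
  -- step relation : T k = p (k+1) + T (k+1) for k ≠ last
  have hstep : ∀ k : Fin (K+1), k ≠ Fin.last K → T k = p (k+1) + T (k+1) := by
    intro k hk
    have hkK : (k : ℕ) < K := by
      have := Fin.lt_last_iff_ne_last.mpr hk
      simpa [Fin.lt_def] using this
    have hval : ((k+1 : Fin (K+1)) : ℕ) = (k : ℕ) + 1 := by
      rw [Fin.val_add_one, if_neg hk]
    have hfil : univ.filter (fun j => k < j)
        = insert (k+1) (univ.filter (fun j => k+1 < j)) := by
      ext j
      simp only [Finset.mem_filter, Finset.mem_univ, true_and, Finset.mem_insert]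
      rw [Fin.lt_def, Fin.lt_def, Fin.ext_iff, hval]
      omega
    have hnot : (k+1) ∉ univ.filter (fun j => k+1 < j) := by simp
    simp only [hTdef]
    rw [hfil, Finset.sum_insert hnot]
  -- p' k + T' k in terms of p k + T k
  have hS'T' : ∀ k, p' k + T' k = (p k + T k) + (if i < k then ε else 0) := by
    intro k
    rw [hp'' k, hT'T k]
    rcases eq_or_ne k i with h1 | h1
    · have e1 : k ≠ Fin.last K := by rw [h1]; exact hi
      have e2 : k < Fin.last K := by rw [h1]; exact hil
      have e3 : ¬ k < i := by rw [h1]; exact lt_irrefl i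
      have e4 : ¬ i < k := by rw [h1]; exact lt_irrefl i
      rw [if_neg e1, if_pos h1, if_pos e2, if_neg e3, if_neg e4]
      ring
    · rcases eq_or_ne k (Fin.last K) with h2 | h2
      · have e1 : ¬ k < Fin.last K := by rw [h2]; exact lt_irrefl _
        have e2 : ¬ k < i := by rw [h2]; exact hil.asymm
        have e3 : i < k := by rw [h2]; exact hil
        rw [if_pos h2, if_neg h1, if_neg e1, if_neg e2, if_pos e3]
        ring
      · rw [if_neg h2, if_neg h1, if_pos (Fin.lt_last_iff_ne_last.mpr h2)]
        rcases lt_or_gt_of_ne h1 with h3 | h3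
        · rw [if_pos h3, if_neg h3.asymm]
          ring
        · rw [if_neg h3.asymm, if_pos h3]
          ring
  -- the gain function
  set G : Fin (K+1) → ℝ → ℝ :=
    fun k s => Real.log (1 + h k * (s + ε)) - Real.log (1 + h k * s) with hGdef
  set B : Finset (Fin (K+1)) := univ.filter (fun m => i < m) with hBdef
  -- rewrite goal in telescoped form
  show (∑ k, Real.log (1 + p k * h k / (1 + h k * T k)))
      < ∑ k, Real.log (1 + p' k * h k / (1 + h k * T' k))
  have hLeq : (∑ k, Real.log (1 + p k * h k / (1 + h k * T k)))
      = ∑ k, (Real.log (1 + h k * (p k + T k)) - Real.log (1 + h k * T k)) :=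
    Finset.sum_congr rfl fun k _ => term_eq (hpos k) (hp k) (hTnn k)
  have hReq : (∑ k, Real.log (1 + p' k * h k / (1 + h k * T' k)))
      = ∑ k, (Real.log (1 + h k * (p' k + T' k)) - Real.log (1 + h k * T' k)) :=
    Finset.sum_congr rfl fun k _ => term_eq (hpos k) (hp'nn k) (hT'nn k)
  rw [hLeq, hReq, Finset.sum_sub_distrib, Finset.sum_sub_distrib]
  -- the numerator difference
  have hdiffS : (∑ k, Real.log (1 + h k * (p' k + T' k)))
      - (∑ k, Real.log (1 + h k * (p k + T k))) = ∑ k ∈ B, G k (p k + T k) := by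
    rw [hBdef, Finset.sum_filter, ← Finset.sum_sub_distrib]
    refine Finset.sum_congr rfl fun k _ => ?_
    rw [hS'T' k]
    split_ifs with hc
    · simp only [hGdef]
    · simp
  -- the denominator difference
  have hdiffT : (∑ k, Real.log (1 + h k * T' k)) - (∑ k, Real.log (1 + h k * T k))
      = ∑ k ∈ univ.filter (fun k => ¬ k < i ∧ k ≠ Fin.last K), G k (T k) := by
    rw [Finset.sum_filter, ← Finset.sum_sub_distrib]
    refine Finset.sum_congr rfl fun k _ => ?_
    rw [hT'T k]
    by_cases hki : k < i
    · have hkL : k < Fin.last K := hki.trans hil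
      rw [if_pos hki, if_pos hkL, if_neg (by tauto)]
      simp
    · by_cases hkL : k ≠ Fin.last K
      · rw [if_neg hki, if_pos (Fin.lt_last_iff_ne_last.mpr hkL), if_pos ⟨hki, hkL⟩]
        simp only [hGdef]
        norm_num
      · push_neg at hkL
        rw [if_neg hki, if_neg (by simp [hkL]), if_neg (by tauto)]
        simp
  -- reindex the denominator sum by shifting
  have hreindex : (∑ k ∈ univ.filter (fun k => ¬ k < i ∧ k ≠ Fin.last K), G k (T k))
      = ∑ m ∈ B, G (m - 1) (p m + T m) := by
    refine Finset.sum_nbij' (fun k => k + 1) (fun m => m - 1) ?_ ?_ ?_ ?_ ?_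
    · intro k hk
      simp only [Finset.mem_filter, Finset.mem_univ, true_and] at hk ⊢
      rw [hBdef]
      simp only [Finset.mem_filter, Finset.mem_univ, true_and]
      have hval : ((k+1 : Fin (K+1)) : ℕ) = (k : ℕ) + 1 := by
        rw [Fin.val_add_one, if_neg hk.2]
      rw [Fin.lt_def, hval]
      have := Fin.le_def.mp (not_lt.mp hk.1)
      omega
    · intro m hm
      rw [hBdef] at hm
      simp only [Finset.mem_filter, Finset.mem_univ, true_and] at hm ⊢
      have hm0 : m ≠ 0 := by
        have := Fin.lt_def.mp hm
        simp only [Ne, Fin.ext_iff, Fin.val_zero]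
        omega
      have hval : ((m - 1 : Fin (K+1)) : ℕ) = (m : ℕ) - 1 := by
        rw [Fin.coe_sub_one, if_neg hm0]
      have him := Fin.lt_def.mp hm
      have hmK : (m : ℕ) ≤ K := Nat.lt_succ_iff.mp m.isLt
      constructor
      · rw [Fin.lt_def, hval]
        omega
      · rw [Ne, Fin.ext_iff, hval, Fin.val_last]
        omega
    · intro k _
      exact add_sub_cancel_right k 1
    · intro m _
      exact sub_add_cancel m 1
    · intro k hk
      simp only [Finset.mem_filter, Finset.mem_univ, true_and] at hk
      rw [add_sub_cancel_right, ← hstep k hk.2]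
  -- final strict comparison
  have hfinal : (∑ m ∈ B, G (m - 1) (p m + T m)) < ∑ m ∈ B, G m (p m + T m) := by
    refine Finset.sum_lt_sum_of_nonempty ?_ ?_
    · refine ⟨Fin.last K, ?_⟩
      rw [hBdef]
      simp only [Finset.mem_filter, Finset.mem_univ, true_and]
      exact hil
    · intro m hm
      rw [hBdef] at hm
      simp only [Finset.mem_filter, Finset.mem_univ, true_and] at hm
      have hm0 : m ≠ 0 := by
        have := Fin.lt_def.mp hm
        simp only [Ne, Fin.ext_iff, Fin.val_zero]
        omega
      have hval : ((m - 1 : Fin (K+1)) : ℕ) = (m : ℕ) - 1 := by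
        rw [Fin.coe_sub_one, if_neg hm0]
      have hlt : m - 1 < m := by
        rw [Fin.lt_def, hval]
        have := Fin.lt_def.mp hm
        omega
      simp only [hGdef]
      exact log_ratio_lt (hpos _) (hmono hlt) (add_nonneg (hp m) (hTnn m)) hε
  linarith [hdiffS, hdiffT, hreindex, hfinal]
end

section
/- Feasibility characterization: the multicarrier NOMA power allocation problem with per-subchannel minimum rates, per-subchannel mask powers P_n^mask, and total power P^max has a feasible point if and only if Q_n^min ≤ P_n^mask for all subchannels n and Σ_n Q_n^min ≤ P^max, where Q_n^min is the minimal total power on subchannel n needed to meet all its users' minimum rates (given in closed form by the triangular-system solution). -/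
open Finset

namespace MCNomaAux

variable {m : ℕ}

/-- closed-form remaining interference power above user `k` -/
noncomputable def S (h β : Fin m → ℝ) (k : Fin m) : ℝ :=
  ∑ j ∈ univ.filter (fun j => k < j),
    (β j / h j) * ∏ l ∈ univ.filter (fun l => k < l ∧ l < j), (1 + β l)

noncomputable def pstar (h β : Fin m → ℝ) (k : Fin m) : ℝ :=
  β k * (1 / h k + S h β k)

lemma filter_last (m' : ℕ) :
    (univ.filter (fun j : Fin (m'+1) => Fin.last m' < j)) = ∅ := by
  apply Finset.filter_false_of_mem
  intro j _
  exact not_lt.mpr (Fin.le_last j)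

lemma filter_castSucc {m' : ℕ} (k : Fin m') :
    (univ.filter (fun j : Fin (m'+1) => k.castSucc < j))
      = insert k.succ (univ.filter (fun j => k.succ < j)) := by
  ext j
  simp only [mem_filter, mem_univ, true_and, mem_insert, Fin.lt_def, Fin.ext_iff,
    Fin.coe_castSucc, Fin.val_succ]
  omega

lemma succ_not_mem {m' : ℕ} (k : Fin m') :
    k.succ ∉ univ.filter (fun j : Fin (m'+1) => k.succ < j) := by
  simp

lemma filter_prod_empty {m' : ℕ} (k : Fin m') :
    (univ.filter (fun l : Fin (m'+1) => k.castSucc < l ∧ l < k.succ)) = ∅ := by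
  apply Finset.filter_false_of_mem
  intro l _
  simp only [Fin.lt_def, Fin.coe_castSucc, Fin.val_succ]
  omega

lemma filter_prod_insert {m' : ℕ} (k : Fin m') (j : Fin (m'+1)) (hj : k.succ < j) :
    (univ.filter (fun l : Fin (m'+1) => k.castSucc < l ∧ l < j))
      = insert k.succ (univ.filter (fun l => k.succ < l ∧ l < j)) := by
  ext l
  simp only [mem_filter, mem_univ, true_and, mem_insert, Fin.lt_def, Fin.ext_iff,
    Fin.coe_castSucc, Fin.val_succ] at *
  omega

lemma succ_not_mem_prod {m' : ℕ} (k : Fin m') (j : Fin (m'+1)) :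
    k.succ ∉ univ.filter (fun l : Fin (m'+1) => k.succ < l ∧ l < j) := by
  simp

lemma S_last {m' : ℕ} (h β : Fin (m'+1) → ℝ) : S h β (Fin.last m') = 0 := by
  simp [S, filter_last]

lemma S_castSucc {m' : ℕ} (h β : Fin (m'+1) → ℝ) (k : Fin m') :
    S h β k.castSucc = β k.succ / h k.succ + (1 + β k.succ) * S h β k.succ := by
  unfold S
  rw [filter_castSucc, Finset.sum_insert (succ_not_mem k), filter_prod_empty]
  simp only [Finset.prod_empty, mul_one]
  congr 1
  rw [Finset.mul_sum]
  apply Finset.sum_congr rfl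
  intro j hj
  simp only [mem_filter, mem_univ, true_and] at hj
  rw [filter_prod_insert k j hj, Finset.prod_insert (succ_not_mem_prod k j)]
  ring

lemma S_nonneg (h β : Fin m → ℝ) (hh : ∀ k, 0 < h k) (hβ : ∀ k, 0 ≤ β k) (k : Fin m) :
    0 ≤ S h β k := by
  apply Finset.sum_nonneg
  intro j _
  apply mul_nonneg (div_nonneg (hβ j) (hh j).le)
  apply Finset.prod_nonneg
  intro l _
  linarith [hβ l]

lemma pstar_nonneg (h β : Fin m → ℝ) (hh : ∀ k, 0 < h k) (hβ : ∀ k, 0 ≤ β k) (k : Fin m) :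
    0 ≤ pstar h β k := by
  apply mul_nonneg (hβ k)
  have := S_nonneg h β hh hβ k
  have := (hh k)
  positivity

/-- key identity: the sum of closed-form powers above `k` equals `S k`. -/
lemma sum_pstar_gt (h β : Fin m → ℝ) (k : Fin m) :
    ∑ j ∈ univ.filter (fun j => k < j), pstar h β j = S h β k := by
  match m with
  | 0 => exact k.elim0
  | m' + 1 =>
    induction k using Fin.reverseInduction with
    | last => rw [S_last]; rw [filter_last]; simp
    | cast k ih =>
      rw [filter_castSucc, Finset.sum_insert (succ_not_mem k), ih, S_castSucc]
      unfold pstar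
      ring

/-- monotonicity: any feasible `p` dominates the closed form termwise on tails. -/
lemma S_le_tail (h β : Fin m → ℝ) (hh : ∀ k, 0 < h k) (hβ : ∀ k, 0 ≤ β k)
    (p : Fin m → ℝ)
    (hcon : ∀ k, β k * (1 / h k + ∑ j ∈ univ.filter (fun j => k < j), p j) ≤ p k)
    (k : Fin m) :
    S h β k ≤ ∑ j ∈ univ.filter (fun j => k < j), p j := by
  match m with
  | 0 => exact k.elim0
  | m' + 1 =>
    induction k using Fin.reverseInduction with
    | last => rw [S_last, filter_last]; simp
    | cast k ih =>
      rw [S_castSucc, filter_castSucc, Finset.sum_insert (succ_not_mem k)]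
      have h1 := hcon k.succ
      have h2 : 0 ≤ β k.succ := hβ k.succ
      have h3 : β k.succ * S h β k.succ ≤ β k.succ * ∑ j ∈ univ.filter (fun j => k.succ < j), p j :=
        mul_le_mul_of_nonneg_left ih h2
      have h4 : β k.succ * (1 / h k.succ) = β k.succ / h k.succ := by ring
      nlinarith

lemma pstar_le (h β : Fin m → ℝ) (hh : ∀ k, 0 < h k) (hβ : ∀ k, 0 ≤ β k)
    (p : Fin m → ℝ)
    (hcon : ∀ k, β k * (1 / h k + ∑ j ∈ univ.filter (fun j => k < j), p j) ≤ p k)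
    (k : Fin m) : pstar h β k ≤ p k := by
  refine le_trans ?_ (hcon k)
  unfold pstar
  have := S_le_tail h β hh hβ p hcon k
  have := hβ k
  nlinarith

end MCNomaAux
/-- Feasibility characterization of multicarrier NOMA power allocation: with per-subchannel
minimum rates, mask powers `Pmask n` and total budget `Pmax`, a feasible power allocation
exists iff `Qmin n ≤ Pmask n` for every subchannel `n` and `∑ n, Qmin n ≤ Pmax`, where
`Qmin n` is the (closed-form) minimal total power on subchannel `n` meeting all its users'
minimum rates with equality. -/
theorem mc_noma_feasibility_iff
    (N : ℕ) (M : Fin N → ℕ) (Ws : ℝ) (hW : 0 < Ws)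
    (h : (n : Fin N) → Fin (M n) → ℝ)
    (hpos : ∀ n k, 0 < h n k) (hmono : ∀ n, StrictMono (h n))
    (Rmin : (n : Fin N) → Fin (M n) → ℝ) (hR : ∀ n k, 0 ≤ Rmin n k)
    (Pmask : Fin N → ℝ) (Pmax : ℝ)
    (β : (n : Fin N) → Fin (M n) → ℝ)
    (hβ : ∀ n k, β n k = (2 : ℝ) ^ (Rmin n k / Ws) - 1)
    (Qmin : Fin N → ℝ)
    (hQ : ∀ n, Qmin n = ∑ k, β n k * (1 / h n k +
      ∑ j ∈ univ.filter (fun j => k < j),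
        (β n j / h n j) * ∏ l ∈ univ.filter (fun l => k < l ∧ l < j), (1 + β n l))) :
    (∃ p : (n : Fin N) → Fin (M n) → ℝ,
      (∀ n k, 0 ≤ p n k) ∧
      (∀ n k, Rmin n k ≤ Ws * Real.logb 2 (1 + p n k * h n k /
          (1 + h n k * ∑ j ∈ univ.filter (fun j => k < j), p n j))) ∧
      (∀ n, ∑ k, p n k ≤ Pmask n) ∧
      (∑ n, ∑ k, p n k ≤ Pmax))
    ↔ ((∀ n, Qmin n ≤ Pmask n) ∧ ∑ n, Qmin n ≤ Pmax) := by
  have hβnn : ∀ n k, 0 ≤ β n k := by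
    intro n k
    rw [hβ n k]
    have h1 : (2:ℝ) ^ (0:ℝ) ≤ (2:ℝ) ^ (Rmin n k / Ws) :=
      Real.rpow_le_rpow_of_exponent_le one_le_two (div_nonneg (hR n k) hW.le)
    rw [Real.rpow_zero] at h1
    linarith
  -- Qmin n is the sum of the closed form powers
  have hQsum : ∀ n, Qmin n = ∑ k, MCNomaAux.pstar (h n) (β n) k := by
    intro n
    rw [hQ n]
    rfl
  constructor
  · rintro ⟨p, hnn, hrate, hmask, htot⟩
    -- convert each rate constraint to the linear form
    have hcon : ∀ n k, β n k * (1 / h n k +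
        ∑ j ∈ univ.filter (fun j => k < j), p n j) ≤ p n k := by
      intro n k
      set Q := ∑ j ∈ univ.filter (fun j => k < j), p n j with hQdef
      have hQnn : 0 ≤ Q := Finset.sum_nonneg fun j _ => hnn n j
      have hden : (0:ℝ) < 1 + h n k * Q := by nlinarith [hpos n k]
      have hy : (0:ℝ) < 1 + p n k * h n k / (1 + h n k * Q) := by
        have : 0 ≤ p n k * h n k / (1 + h n k * Q) :=
          div_nonneg (mul_nonneg (hnn n k) (hpos n k).le) hden.le
        linarith
      have h1 := hrate n k
      rw [← hQdef] at h1
      have h2 : Rmin n k / Ws ≤ Real.logb 2 (1 + p n k * h n k / (1 + h n k * Q)) := by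
        rw [div_le_iff₀ hW]
        linarith [h1]
      have h3 : (2:ℝ) ^ (Rmin n k / Ws) ≤ 1 + p n k * h n k / (1 + h n k * Q) := by
        calc (2:ℝ) ^ (Rmin n k / Ws)
            ≤ (2:ℝ) ^ Real.logb 2 (1 + p n k * h n k / (1 + h n k * Q)) :=
              Real.rpow_le_rpow_of_exponent_le one_le_two h2
          _ = 1 + p n k * h n k / (1 + h n k * Q) :=
              Real.rpow_logb (by norm_num) (by norm_num) hy
      have h4 : β n k ≤ p n k * h n k / (1 + h n k * Q) := by
        rw [hβ n k]; linarith
      have h5 : β n k * (1 + h n k * Q) ≤ p n k * h n k :=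
        (le_div_iff₀ hden).mp h4
      have hhk := hpos n k
      rw [mul_comm] at h5
      have h6 : β n k * (1 / h n k + Q) = β n k * (1 + h n k * Q) / h n k := by
        field_simp
      rw [h6]
      rw [div_le_iff₀ hhk]
      linarith [h5]
    have key : ∀ n, Qmin n ≤ ∑ k, p n k := by
      intro n
      rw [hQsum n]
      exact Finset.sum_le_sum fun k _ =>
        MCNomaAux.pstar_le (h n) (β n) (hpos n) (hβnn n) (p n) (hcon n) k
    exact ⟨fun n => le_trans (key n) (hmask n),
      le_trans (Finset.sum_le_sum fun n _ => key n) htot⟩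
  · rintro ⟨hm, ht⟩
    refine ⟨fun n => MCNomaAux.pstar (h n) (β n), ?_, ?_, ?_, ?_⟩
    · intro n k
      exact MCNomaAux.pstar_nonneg (h n) (β n) (hpos n) (hβnn n) k
    · intro n k
      rw [MCNomaAux.sum_pstar_gt (h n) (β n) k]
      have hSnn := MCNomaAux.S_nonneg (h n) (β n) (hpos n) (hβnn n) k
      have hhk := hpos n k
      have hden : (0:ℝ) < 1 + h n k * MCNomaAux.S (h n) (β n) k := by nlinarith
      have hratio : MCNomaAux.pstar (h n) (β n) k * h n k /
          (1 + h n k * MCNomaAux.S (h n) (β n) k) = β n k := by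
        unfold MCNomaAux.pstar
        field_simp
      rw [hratio, hβ n k]
      have : (1:ℝ) + ((2:ℝ) ^ (Rmin n k / Ws) - 1) = (2:ℝ) ^ (Rmin n k / Ws) := by ring
      rw [this, Real.logb_rpow (by norm_num) (by norm_num),
        mul_div_cancel₀ _ (ne_of_gt hW)]
    · intro n
      rw [← hQsum n]
      exact hm n
    · calc ∑ n, ∑ k, MCNomaAux.pstar (h n) (β n) k = ∑ n, Qmin n := by
            exact Finset.sum_congr rfl fun n _ => (hQsum n).symm
        _ ≤ Pmax := ht
end

section
/- Monotonicity of minimum cluster power: in a K-user NOMA cluster, any nonnegative power vector satisfying all K minimum-rate constraints has total power at least Q^min, the total power of the unique allocation meeting all constraints with equality; i.e., the allocation with all rates at their minima minimizes total power. -/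
open Finset

/-- Minimum-power monotonicity: any nonnegative power vector satisfying all the minimum-rate
constraints in a `K`-user NOMA cluster uses at least as much total power as the unique
allocation meeting every constraint with equality. -/
theorem noma_equality_allocation_minimizes_total_power
    (K : ℕ) (W : ℝ) (hW : 0 < W)
    (h : Fin K → ℝ) (hpos : ∀ k, 0 < h k) (hmono : StrictMono h)
    (Rmin : Fin K → ℝ)
    (pstar : Fin K → ℝ) (hpstar : ∀ k, 0 ≤ pstar k)
    (hstar : ∀ k, nomaRate W h pstar k = Rmin k)
    (p : Fin K → ℝ) (hp : ∀ k, 0 ≤ p k)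
    (hfeas : ∀ k, Rmin k ≤ nomaRate W h p k) :
    ∑ k, pstar k ≤ ∑ k, p k := by
  set Tp : ℕ → ℝ := fun c => ∑ j ∈ univ.filter (fun j : Fin K => c ≤ j.val), p j with hTp
  set Ts : ℕ → ℝ := fun c => ∑ j ∈ univ.filter (fun j : Fin K => c ≤ j.val), pstar j with hTs
  have hTpnn : ∀ c, 0 ≤ Tp c := fun c => Finset.sum_nonneg fun j _ => hp j
  have hTsnn : ∀ c, 0 ≤ Ts c := fun c => Finset.sum_nonneg fun j _ => hpstar j
  have key : ∀ n, n ≤ K → Ts (K - n) ≤ Tp (K - n) := by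
    intro n
    induction n with
    | zero =>
      intro _
      have hempty : (univ.filter (fun j : Fin K => K - 0 ≤ j.val)) = ∅ := by
        ext j
        simp only [Finset.mem_filter, Finset.mem_univ, true_and, Finset.notMem_empty, iff_false]
        omega
      simp only [hTp, hTs, hempty, Finset.sum_empty, le_refl]
    | succ n ih =>
      intro hn
      have hc : K - (n+1) < K := by omega
      set c := K - (n+1) with hcdef
      have hc1 : c + 1 = K - n := by omega
      set k : Fin K := ⟨c, hc⟩ with hk
      -- split off the k-th term
      have hsplit : (univ.filter (fun j : Fin K => c ≤ j.val))
          = insert k (univ.filter (fun j : Fin K => c + 1 ≤ j.val)) := by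
        ext j
        simp [hk, Fin.ext_iff]
        omega
      have hknot : k ∉ univ.filter (fun j : Fin K => c + 1 ≤ j.val) := by
        simp [hk]
      have hTpc : Tp c = p k + Tp (c+1) := by
        simp only [hTp, hsplit, Finset.sum_insert hknot]
      have hTsc : Ts c = pstar k + Ts (c+1) := by
        simp only [hTs, hsplit, Finset.sum_insert hknot]
      -- the nomaRate tail is exactly T (c+1)
      have hfilt : (univ.filter (fun j : Fin K => k < j))
          = univ.filter (fun j : Fin K => c + 1 ≤ j.val) := by
        ext j
        simp [Fin.lt_def, hk]
      have ihc : Ts (c+1) ≤ Tp (c+1) := by rw [hc1]; exact ih (by omega)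
      -- rate inequality for user k
      have hrate : nomaRate W h pstar k ≤ nomaRate W h p k := (hstar k) ▸ hfeas k
      unfold nomaRate at hrate
      rw [hfilt] at hrate
      have hrate' : Real.logb 2 (1 + pstar k * h k / (1 + h k * Ts (c+1)))
          ≤ Real.logb 2 (1 + p k * h k / (1 + h k * Tp (c+1))) :=
        le_of_mul_le_mul_left hrate hW
      have hhk := hpos k
      have hdenS : (0:ℝ) < 1 + h k * Ts (c+1) := by nlinarith [hTsnn (c+1)]
      have hdenP : (0:ℝ) < 1 + h k * Tp (c+1) := by nlinarith [hTpnn (c+1)]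
      have hxpos : (0:ℝ) < 1 + pstar k * h k / (1 + h k * Ts (c+1)) := by
        have : 0 ≤ pstar k * h k / (1 + h k * Ts (c+1)) :=
          div_nonneg (by nlinarith [hpstar k]) hdenS.le
        linarith
      have hypos : (0:ℝ) < 1 + p k * h k / (1 + h k * Tp (c+1)) := by
        have : 0 ≤ p k * h k / (1 + h k * Tp (c+1)) :=
          div_nonneg (by nlinarith [hp k]) hdenP.le
        linarith
      have hle : 1 + pstar k * h k / (1 + h k * Ts (c+1))
          ≤ 1 + p k * h k / (1 + h k * Tp (c+1)) :=
        (Real.logb_le_logb (by norm_num) hxpos hypos).mp hrate'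
      have hle' : pstar k * h k / (1 + h k * Ts (c+1))
          ≤ p k * h k / (1 + h k * Tp (c+1)) := by linarith
      have hcross : pstar k * h k * (1 + h k * Tp (c+1))
          ≤ p k * h k * (1 + h k * Ts (c+1)) :=
        (div_le_div_iff₀ hdenS hdenP).mp hle'
      rw [hTpc, hTsc]
      have hST : 1 + h k * Ts (c+1) ≤ 1 + h k * Tp (c+1) := by
        have := mul_le_mul_of_nonneg_left ihc hhk.le
        linarith
      have h1 : pstar k * h k * (1 + h k * Ts (c+1)) ≤ pstar k * h k * (1 + h k * Tp (c+1)) :=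
        mul_le_mul_of_nonneg_left hST (mul_nonneg (hpstar k) hhk.le)
      have h2 : pstar k * h k * (1 + h k * Ts (c+1)) ≤ p k * h k * (1 + h k * Ts (c+1)) :=
        h1.trans hcross
      have hAB : pstar k * h k ≤ p k * h k := le_of_mul_le_mul_right h2 hdenS
      have hAB' : pstar k ≤ p k := le_of_mul_le_mul_right hAB hhk
      linarith
  have hfin := key K le_rfl
  have huniv : (univ.filter (fun j : Fin K => K - K ≤ j.val)) = univ := by
    ext j; simp
  simpa only [hTp, hTs, huniv] using hfin
end

section
/- Dinkelbach correspondence: for f1 concave continuous, f2 positive continuous on a nonempty compact convex set P, the maximum of f1/f2 over P equals λ* if and only if max_{p∈P} [f1(p) - λ* f2(p)] = 0; moreover F(λ) = max_{p∈P}[f1(p) - λ f2(p)] is strictly decreasing and has a unique root. -/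
open Finset

/-- Dinkelbach correspondence: for `f1` concave continuous and `f2` positive continuous on a
nonempty compact convex set `P`, the maximum of `f1 / f2` over `P` equals `lam` iff
`F lam = max_{p ∈ P} (f1 p - lam * f2 p) = 0`; moreover `F` is continuous, convex and
strictly decreasing (hence has a unique root), and `p` maximizes the ratio iff it maximizes
the parametric objective at the root. -/
theorem dinkelbach_correspondence
    (d : ℕ) (P : Set (Fin d → ℝ)) (hne : P.Nonempty)
    (hcomp : IsCompact P) (hconv : Convex ℝ P)
    (f1 f2 : (Fin d → ℝ) → ℝ)
    (hf1 : ContinuousOn f1 P) (hconc : ConcaveOn ℝ P f1)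
    (hf2 : ContinuousOn f2 P) (hf2pos : ∀ p ∈ P, 0 < f2 p)
    (F : ℝ → ℝ)
    (hF : ∀ lam : ℝ, F lam = sSup ((fun p => f1 p - lam * f2 p) '' P)) :
    StrictAnti F ∧ Continuous F ∧ ConvexOn ℝ Set.univ F ∧
    (∀ lam : ℝ, IsGreatest ((fun p => f1 p / f2 p) '' P) lam ↔ F lam = 0) ∧
    (∀ lam : ℝ, F lam = 0 → ∀ p ∈ P,
      (IsMaxOn (fun x => f1 x / f2 x) P p ↔
        IsMaxOn (fun x => f1 x - lam * f2 x) P p)) := by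
  -- Key fact: the sup is attained.
  have key : ∀ lam : ℝ, ∃ p ∈ P, F lam = f1 p - lam * f2 p ∧
      ∀ q ∈ P, f1 q - lam * f2 q ≤ F lam := by
    intro lam
    obtain ⟨p, hp, hmax⟩ := hcomp.exists_isMaxOn hne
      (hf1.sub (continuousOn_const.mul hf2))
    have hgr : IsGreatest ((fun p => f1 p - lam * f2 p) '' P) (f1 p - lam * f2 p) :=
      ⟨⟨p, hp, rfl⟩, by rintro _ ⟨q, hq, rfl⟩; exact hmax hq⟩
    refine ⟨p, hp, ?_, ?_⟩
    · rw [hF]; exact hgr.csSup_eq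
    · intro q hq; rw [hF, hgr.csSup_eq]; exact hmax hq
  have hanti : StrictAnti F := by
    intro a b hab
    obtain ⟨p, hp, hFb, _⟩ := key b
    obtain ⟨_, _, _, hub⟩ := key a
    calc F b = f1 p - b * f2 p := hFb
      _ < f1 p - a * f2 p := by nlinarith [hf2pos p hp]
      _ ≤ F a := hub p hp
  obtain ⟨pm, hpm, hM⟩ := hcomp.exists_isMaxOn hne hf2
  have hMpos : 0 < f2 pm := hf2pos pm hpm
  have hlip : ∀ a b : ℝ, F a - F b ≤ f2 pm * |a - b| := by
    intro a b
    obtain ⟨p, hp, hFa, _⟩ := key a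
    obtain ⟨_, _, _, hub⟩ := key b
    have h1 : f1 p - b * f2 p ≤ F b := hub p hp
    have h2 : 0 < f2 p := hf2pos p hp
    have h3 : f2 p ≤ f2 pm := hM hp
    have h4 : b - a ≤ |a - b| := by rw [abs_sub_comm]; exact le_abs_self _
    have h5 : (0:ℝ) ≤ |a - b| := abs_nonneg _
    nlinarith [mul_nonneg (sub_nonneg.mpr h4) h2.le,
      mul_nonneg h5 (sub_nonneg.mpr h3)]
  have hcont : Continuous F := by
    have hL : LipschitzWith (f2 pm).toNNReal F := by
      apply LipschitzWith.of_dist_le_mul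
      intro a b
      rw [Real.dist_eq, Real.dist_eq, Real.coe_toNNReal _ hMpos.le, abs_sub_le_iff]
      exact ⟨hlip a b, by simpa [abs_sub_comm] using hlip b a⟩
    exact hL.continuous
  have hconvF : ConvexOn ℝ Set.univ F := by
    refine ⟨convex_univ, ?_⟩
    intro a _ b _ s t hs ht hst
    obtain ⟨p, hp, hFval, _⟩ := key (s • a + t • b)
    obtain ⟨_, _, _, huba⟩ := key a
    obtain ⟨_, _, _, hubb⟩ := key b
    have h1 := huba p hp
    have h2 := hubb p hp
    rw [hFval]
    simp only [smul_eq_mul]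
    have hid : f1 p - (s * a + t * b) * f2 p
        = s * (f1 p - a * f2 p) + t * (f1 p - b * f2 p) := by
      linear_combination (-(f1 p)) * hst
    rw [hid]
    exact add_le_add (mul_le_mul_of_nonneg_left h1 hs) (mul_le_mul_of_nonneg_left h2 ht)
  have hiff : ∀ lam : ℝ, IsGreatest ((fun p => f1 p / f2 p) '' P) lam ↔ F lam = 0 := by
    intro lam
    constructor
    · rintro ⟨⟨p, hp, hpe⟩, hub⟩
      obtain ⟨q, hq, hFq, hubF⟩ := key lam
      have h2p := hf2pos p hp
      have h0 : f1 p = lam * f2 p := by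
        rw [div_eq_iff h2p.ne'] at hpe; linarith
      have hq2 := hf2pos q hq
      have hqle : f1 q / f2 q ≤ lam := hub ⟨q, hq, rfl⟩
      have hqle' : f1 q ≤ lam * f2 q := (div_le_iff₀ hq2).mp hqle
      have := hubF p hp
      linarith
    · intro h0
      obtain ⟨q, hq, hFq, hubF⟩ := key lam
      have hq2 := hf2pos q hq
      have hq0 : f1 q - lam * f2 q = 0 := by rw [← hFq]; exact h0
      refine ⟨⟨q, hq, ?_⟩, ?_⟩
      · rw [div_eq_iff hq2.ne']; linarith
      · rintro _ ⟨r, hr, rfl⟩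
        have := hubF r hr
        rw [h0] at this
        rw [div_le_iff₀ (hf2pos r hr)]
        linarith
  refine ⟨hanti, hcont, hconvF, hiff, ?_⟩
  intro lam h0 p hp
  have hgr : IsGreatest ((fun p => f1 p / f2 p) '' P) lam := (hiff lam).mpr h0
  obtain ⟨⟨p0, hp0, hp0e⟩, hub⟩ := hgr
  obtain ⟨q, hq, hFq, hubF⟩ := key lam
  have hp2 := hf2pos p hp
  constructor
  · intro hmax
    have hratio_p : f1 p / f2 p = lam :=
      le_antisymm (hub ⟨p, hp, rfl⟩) (hp0e ▸ hmax hp0)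
    have hpval : f1 p = lam * f2 p := (div_eq_iff hp2.ne').mp hratio_p
    intro r hr
    have h1 : f1 r / f2 r ≤ lam := hub ⟨r, hr, rfl⟩
    have h2 : f1 r ≤ lam * f2 r := (div_le_iff₀ (hf2pos r hr)).mp h1
    show f1 r - lam * f2 r ≤ f1 p - lam * f2 p
    linarith
  · intro hmax
    have hq0 : f1 q - lam * f2 q = 0 := by rw [← hFq]; exact h0
    have hle : f1 p - lam * f2 p ≤ 0 := by
      have := hubF p hp; linarith
    have hge : (0:ℝ) ≤ f1 p - lam * f2 p := by
      have := hmax hq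
      simp only [Set.mem_setOf_eq] at this
      linarith
    have hpval : f1 p / f2 p = lam := by
      rw [div_eq_iff hp2.ne']; linarith
    intro r hr
    show f1 r / f2 r ≤ f1 p / f2 p
    rw [hpval]
    exact hub ⟨r, hr, rfl⟩
end

section
/- Two-user NOMA with maximum-rate cap, closed form: with h1 < h2, minimum rate R1^min for user 1, maximum rate R2^max for user 2, and total budget P, the sum-rate-maximizing powers are p2* = min( (1-β1)P - β1/h1 , M2 ) and p1* = P' - p2*, where β1 = (2^(R1^min/W)-1)/2^(R1^min/W), M2 = (2^(R2^max/W)-1)/h2, and P' is the actual total power used; in particular if (1-β1)P - β1/h1 ≤ M2 then user 1's rate equals exactly R1^min at the optimum. -/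
/-- Two-user NOMA with a maximum-rate cap on the strong user, closed form: with
`0 < h1 < h2`, `β1 = (2^(R1min/W) - 1)/2^(R1min/W)` and `M2 = (2^(R2max/W) - 1)/h2`, if the
uncapped optimum `(1 - β1) P - β1/h1` does not exceed `M2` (and is nonnegative), then
`p1 = β1 (P + 1/h1)`, `p2 = (1 - β1) P - β1/h1` maximize the sum-rate over the feasible set,
the full budget `P` is used, and user 1's rate equals `R1min` exactly. -/
theorem two_user_noma_max_rate_cap_closed_form
    (W h1 h2 P R1min R2max : ℝ) (hW : 0 < W) (hh1 : 0 < h1) (h12 : h1 < h2)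
    (hR1 : 0 ≤ R1min) (hR2 : 0 ≤ R2max)
    (β1 M2 : ℝ)
    (hβ1 : β1 = ((2 : ℝ) ^ (R1min / W) - 1) / (2 : ℝ) ^ (R1min / W))
    (hM2 : M2 = ((2 : ℝ) ^ (R2max / W) - 1) / h2)
    (hcase : (1 - β1) * P - β1 / h1 ≤ M2)
    (hfeas : 0 ≤ (1 - β1) * P - β1 / h1) :
    IsMaxOn
      (fun pp : ℝ × ℝ =>
        W * Real.logb 2 (1 + pp.1 * h1 / (1 + pp.2 * h1)) +
          W * Real.logb 2 (1 + pp.2 * h2))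
      {pp : ℝ × ℝ | 0 ≤ pp.1 ∧ 0 ≤ pp.2 ∧ pp.1 + pp.2 ≤ P ∧
        R1min ≤ W * Real.logb 2 (1 + pp.1 * h1 / (1 + pp.2 * h1)) ∧ pp.2 ≤ M2}
      (β1 * (P + 1 / h1), (1 - β1) * P - β1 / h1) ∧
    β1 * (P + 1 / h1) + ((1 - β1) * P - β1 / h1) = P ∧
    W * Real.logb 2 (1 + (β1 * (P + 1 / h1)) * h1 /
        (1 + ((1 - β1) * P - β1 / h1) * h1)) = R1min := by
  have hW' : W ≠ 0 := hW.ne'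
  set t : ℝ := (2 : ℝ) ^ (R1min / W) with htdef
  clear_value t
  have ht1 : 1 ≤ t := by
    rw [htdef]
    calc (1:ℝ) = (2:ℝ) ^ (0:ℝ) := (Real.rpow_zero 2).symm
    _ ≤ _ := Real.rpow_le_rpow_of_exponent_le (by norm_num) (by positivity)
  have ht0 : (0:ℝ) < t := lt_of_lt_of_le one_pos ht1
  set q : ℝ := (1 - β1) * P - β1 / h1 with hqdef
  clear_value q
  have hq0 : 0 ≤ q := hfeas
  have hβ : β1 = (t - 1) / t := hβ1
  have hq : q * (t * h1) = 1 + P * h1 - t := by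
    rw [hqdef, hβ]; field_simp; ring
  have hP0 : 0 ≤ P := by
    nlinarith only [hq, hq0, ht0, ht1, hh1, mul_nonneg hq0 (mul_pos ht0 hh1).le]
  have hAstar : 1 + P * h1 = t * (1 + q * h1) := by nlinarith only [hq]
  have hBspos : (0:ℝ) < 1 + q * h1 := by
    nlinarith only [mul_nonneg hq0 hh1.le]
  have hinner : 1 + (β1 * (P + 1 / h1)) * h1 / (1 + q * h1) = t := by
    have hnum : (β1 * (P + 1 / h1)) * h1 = (t - 1) * (1 + q * h1) := by
      rw [hβ]; rw [div_mul_eq_mul_div, div_mul_eq_mul_div]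
      rw [div_eq_iff ht0.ne']
      have hh1' : h1 ≠ 0 := hh1.ne'
      field_simp
      linear_combination (1 - t) * hq
    rw [hnum, mul_div_assoc, div_self hBspos.ne', mul_one]; ring
  have hrate_opt : W * Real.logb 2 (1 + (β1 * (P + 1 / h1)) * h1 /
      (1 + q * h1)) = R1min := by
    rw [hinner, htdef, Real.logb_rpow (by norm_num) (by norm_num)]
    field_simp
  refine ⟨?_, by rw [hqdef]; ring, hrate_opt⟩
  rw [isMaxOn_iff]
  rintro ⟨p1, p2⟩ ⟨hp1, hp2, hsum, hrate, hcap⟩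
  simp only at hp1 hp2 hsum hrate hcap ⊢
  set A : ℝ := 1 + (p1 + p2) * h1 with hAdef
  set B : ℝ := 1 + p2 * h1 with hBdef
  set C : ℝ := 1 + p2 * h2 with hCdef
  set Cs : ℝ := 1 + q * h2 with hCsdef
  clear_value A; clear_value B; clear_value C; clear_value Cs
  have hBpos : (0:ℝ) < B := by
    rw [hBdef]; nlinarith only [mul_nonneg hp2 hh1.le]
  have hApos : (0:ℝ) < A := by
    rw [hAdef]; nlinarith only [mul_nonneg (add_nonneg hp1 hp2) hh1.le]
  have hCpos : (0:ℝ) < C := by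
    rw [hCdef]; nlinarith only [mul_nonneg hp2 (hh1.trans h12).le]
  have hCspos : (0:ℝ) < Cs := by
    rw [hCsdef]; nlinarith only [mul_nonneg hq0 (hh1.trans h12).le]
  have hAB : 1 + p1 * h1 / B = A / B := by
    rw [hAdef, hBdef]; field_simp; ring
  -- from rate constraint: t * B ≤ A
  have htBA : t * B ≤ A := by
    have h1' : R1min / W ≤ Real.logb 2 (A / B) := by
      rw [div_le_iff₀ hW]; rw [hAB] at hrate; linarith only [hrate]
    have h2' : t ≤ A / B := by
      calc t = (2:ℝ) ^ (R1min / W) := htdef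
      _ ≤ (2:ℝ) ^ (Real.logb 2 (A / B)) :=
          Real.rpow_le_rpow_of_exponent_le (by norm_num) h1'
      _ = A / B := Real.rpow_logb (by norm_num) (by norm_num) (by positivity)
    rwa [le_div_iff₀ hBpos] at h2'
  have hAle : A ≤ t * (1 + q * h1) := by
    rw [← hAstar, hAdef]
    nlinarith only [mul_nonneg (sub_nonneg.2 hsum) hh1.le]
  have hp2q : p2 ≤ q := by
    have h3 : t * B ≤ t * (1 + q * h1) := le_trans htBA hAle
    rw [hBdef] at h3
    nlinarith only [h3, ht0, hh1, mul_pos ht0 hh1]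
  -- main product inequality
  have hmain : A * C / B ≤ t * Cs := by
    rw [div_le_iff₀ hBpos]
    have key : (1 + q * h1) * C ≤ Cs * B := by
      rw [hCdef, hCsdef, hBdef]
      nlinarith only [mul_nonneg (sub_nonneg.2 hp2q) (sub_nonneg.2 h12.le)]
    calc A * C ≤ (t * (1 + q * h1)) * C := by
          nlinarith only [mul_nonneg (sub_nonneg.2 hAle) hCpos.le]
    _ = t * ((1 + q * h1) * C) := by ring
    _ ≤ t * (Cs * B) := by
          nlinarith only [mul_nonneg ht0.le (sub_nonneg.2 key)]
    _ = t * Cs * B := by ring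
  have hlog : Real.logb 2 (A / B * C) ≤ Real.logb 2 (t * Cs) :=
    Real.logb_le_logb_of_le (by norm_num) (by positivity)
      (by rw [div_mul_eq_mul_div]; exact hmain)
  have hsplit : Real.logb 2 (A / B * C) = Real.logb 2 (A / B) + Real.logb 2 C :=
    Real.logb_mul (by positivity) hCpos.ne'
  have hsplit2 : Real.logb 2 (t * Cs) = Real.logb 2 t + Real.logb 2 Cs :=
    Real.logb_mul ht0.ne' hCspos.ne'
  rw [hAB, hinner]
  rw [hsplit, hsplit2] at hlog
  have := mul_le_mul_of_nonneg_left hlog hW.le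
  linarith only [this]
end
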